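/- Assume in addition that σ_j ≤ λ for every j ∈ J and that X_j ~ N(0, σ_j²) for each j ∈ J. Then there exists a constant C > 0 depending only on t such that Σ_{j∈J} E[|X_j|^{2t} · 1{|X_j|^t > τ}] ≤ C ρ². -/

import Mathlib

open MeasureTheory ProbabilityTheory Real

/-- `u ^ t * exp (-u / c) ≤ (t * c) ^ t` for `u ≥ 0`, `c > 0`, `t ≥ 1`. -/
lemma poly_mul_exp_le (t c u : ℝ) (ht : 1 ≤ t) (hc : 0 < c) (hu : 0 ≤ u) :
    u ^ t * Real.exp (-u / c) ≤ (t * c) ^ t := by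
  have ht0 : 0 < t := lt_of_lt_of_le one_pos ht
  rcases eq_or_lt_of_le hu with h | hu
  · rw [← h, Real.zero_rpow ht0.ne', zero_mul]
    positivity
  · set r : ℝ := u / (t * c) with hr_def
    have hr : 0 < r := by positivity
    have h1 : r ≤ Real.exp (r - 1) := by
      have := Real.add_one_le_exp (r - 1)
      linarith
    have h2 : r ^ t ≤ Real.exp ((r - 1) * t) := by
      calc r ^ t ≤ (Real.exp (r - 1)) ^ t := Real.rpow_le_rpow hr.le h1 ht0.le
        _ = Real.exp ((r - 1) * t) := (Real.exp_mul _ _).symm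
    have hu_eq : u = r * (t * c) := by
      rw [hr_def, div_mul_cancel₀ u (by positivity)]
    have h3 : u ^ t = r ^ t * (t * c) ^ t := by
      rw [hu_eq, Real.mul_rpow hr.le (by positivity)]
    have hrt : r * t = u / c := by
      rw [hr_def]; field_simp
    calc u ^ t * Real.exp (-u / c) = r ^ t * Real.exp (-u / c) * (t * c) ^ t := by
          rw [h3]; ring
      _ ≤ Real.exp ((r - 1) * t) * Real.exp (-u / c) * (t * c) ^ t := by
          have hE := (Real.exp_pos (-u / c)).le
          have hpow : (0:ℝ) ≤ (t * c) ^ t := by positivity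
          exact mul_le_mul_of_nonneg_right (mul_le_mul_of_nonneg_right h2 hE) hpow
      _ = Real.exp ((r - 1) * t + -u / c) * (t * c) ^ t := by rw [Real.exp_add]
      _ = Real.exp (-t) * (t * c) ^ t := by
          congr 2
          have : (r - 1) * t = u / c - t := by rw [sub_mul, hrt]; ring
          rw [this]; ring
      _ ≤ 1 * (t * c) ^ t := by
          have : Real.exp (-t) ≤ 1 := Real.exp_le_one_iff.mpr (by linarith)
          have hpow : (0:ℝ) ≤ (t * c) ^ t := by positivity
          nlinarith
      _ = (t * c) ^ t := one_mul _

/-- Gaussian tail moment bound. -/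
lemma gauss_tail_bound (t σ a : ℝ) (ht : 1 ≤ t) (hσ : 0 < σ) (ha : 0 < a) :
    ∫ x in {x : ℝ | a < |x|}, |x| ^ (2 * t) ∂(gaussianReal 0 ((σ : ℝ) ^ 2).toNNReal)
      ≤ 2 * (4 * t) ^ t * σ ^ (2 * t) * Real.exp (-a ^ 2 / (8 * σ ^ 2)) := by
  have ht0 : 0 < t := lt_of_lt_of_le one_pos ht
  have hvcoe : (((σ : ℝ) ^ 2).toNNReal : ℝ) = σ ^ 2 := Real.coe_toNNReal _ (sq_nonneg σ)
  have hv : ((σ : ℝ) ^ 2).toNNReal ≠ 0 := by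
    simp only [ne_eq, ← NNReal.coe_eq_zero, hvcoe]
    positivity
  have hS : MeasurableSet {x : ℝ | a < |x|} :=
    (isOpen_lt continuous_const continuous_abs).measurableSet
  -- rewrite the gaussian integral as a Lebesgue integral
  have hpdf_meas : Measurable fun x => (gaussianPDFReal 0 ((σ : ℝ) ^ 2).toNNReal x).toNNReal :=
    (measurable_gaussianPDFReal _ _).real_toNNReal
  rw [gaussianReal_of_var_ne_zero 0 hv]
  have hgpdf : gaussianPDF 0 ((σ : ℝ) ^ 2).toNNReal
      = fun x => ((gaussianPDFReal 0 ((σ : ℝ) ^ 2).toNNReal x).toNNReal : ENNReal) := rfl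
  rw [hgpdf, setIntegral_withDensity_eq_setIntegral_smul hpdf_meas _ hS]
  have hpdf_eq : ∀ x : ℝ,
      ((gaussianPDFReal 0 ((σ : ℝ) ^ 2).toNNReal x).toNNReal : ℝ) • |x| ^ (2 * t)
      = (Real.sqrt (2 * Real.pi * σ ^ 2))⁻¹ * Real.exp (-x ^ 2 / (2 * σ ^ 2)) * |x| ^ (2 * t) := by
    intro x
    rw [smul_eq_mul, Real.coe_toNNReal _ (gaussianPDFReal_nonneg _ _ _)]
    simp [gaussianPDFReal, hvcoe]
  -- the dominating function
  set c : ℝ := (Real.sqrt (2 * Real.pi * σ ^ 2))⁻¹ with hc_def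
  have hc : 0 < c := by
    rw [hc_def]
    have : 0 < Real.sqrt (2 * Real.pi * σ ^ 2) := Real.sqrt_pos.mpr (by positivity)
    positivity
  set K : ℝ := (4 * t) ^ t * σ ^ (2 * t) * Real.exp (-a ^ 2 / (8 * σ ^ 2)) with hK_def
  have hK : 0 < K := by positivity
  set g : ℝ → ℝ := fun x => K * (c * Real.exp (-(1 / (8 * σ ^ 2)) * x ^ 2)) with hg_def
  have hg_int : Integrable g := by
    exact ((integrable_exp_neg_mul_sq (by positivity : (0:ℝ) < 1 / (8 * σ ^ 2))).const_mul
      c).const_mul K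
  -- pointwise bound on the set
  have hpt : ∀ x ∈ {x : ℝ | a < |x|},
      ((gaussianPDFReal 0 ((σ : ℝ) ^ 2).toNNReal x).toNNReal : ℝ) • |x| ^ (2 * t) ≤ g x := by
    intro x hx
    have hx' : a < |x| := hx
    rw [hpdf_eq]
    have hsplit : Real.exp (-x ^ 2 / (2 * σ ^ 2))
        = Real.exp (-x ^ 2 / (4 * σ ^ 2)) * Real.exp (-x ^ 2 / (8 * σ ^ 2))
          * Real.exp (-x ^ 2 / (8 * σ ^ 2)) := by
      rw [← Real.exp_add, ← Real.exp_add]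
      congr 1
      field_simp
      ring
    have h1 : |x| ^ (2 * t) * Real.exp (-x ^ 2 / (4 * σ ^ 2)) ≤ (4 * t) ^ t * σ ^ (2 * t) := by
      have hxx : |x| ^ (2 * t) = (x ^ 2) ^ t := by
        rw [Real.rpow_mul (abs_nonneg x), Real.rpow_two, sq_abs]
      have := poly_mul_exp_le t (4 * σ ^ 2) (x ^ 2) ht (by positivity) (sq_nonneg x)
      have heq : (t * (4 * σ ^ 2)) ^ t = (4 * t) ^ t * σ ^ (2 * t) := by
        rw [show t * (4 * σ ^ 2) = (4 * t) * σ ^ 2 by ring,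
          Real.mul_rpow (by positivity) (by positivity),
          Real.rpow_mul hσ.le, Real.rpow_two]
      rw [hxx, ← heq]
      exact this
    have h2 : Real.exp (-x ^ 2 / (8 * σ ^ 2)) ≤ Real.exp (-a ^ 2 / (8 * σ ^ 2)) := by
      apply Real.exp_le_exp.mpr
      have : a ^ 2 ≤ x ^ 2 := by
        rw [← sq_abs x]
        nlinarith [abs_nonneg x]
      gcongr
    calc c * Real.exp (-x ^ 2 / (2 * σ ^ 2)) * |x| ^ (2 * t)
        = (|x| ^ (2 * t) * Real.exp (-x ^ 2 / (4 * σ ^ 2)))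
          * Real.exp (-x ^ 2 / (8 * σ ^ 2)) * (c * Real.exp (-x ^ 2 / (8 * σ ^ 2))) := by
          rw [hsplit]; ring
      _ ≤ ((4 * t) ^ t * σ ^ (2 * t)) * Real.exp (-a ^ 2 / (8 * σ ^ 2))
          * (c * Real.exp (-x ^ 2 / (8 * σ ^ 2))) := by
          have e1 : (0:ℝ) ≤ |x| ^ (2 * t) * Real.exp (-x ^ 2 / (4 * σ ^ 2)) := by positivity
          have e2 : (0:ℝ) ≤ c * Real.exp (-x ^ 2 / (8 * σ ^ 2)) := by positivity
          apply mul_le_mul_of_nonneg_right _ e2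
          apply mul_le_mul h1 h2 (Real.exp_pos _).le (by positivity)
      _ = g x := by
          rw [hg_def, hK_def]
          simp only []
          congr 2
          rw [neg_mul]
          congr 1
          field_simp
  -- integrability of the integrand on the set
  have hmeas : Measurable fun x : ℝ =>
      ((gaussianPDFReal 0 ((σ : ℝ) ^ 2).toNNReal x).toNNReal : ℝ) • |x| ^ (2 * t) := by
    apply Measurable.smul (hpdf_meas)
    exact (continuous_abs.rpow_const fun x => Or.inr (by positivity)).measurable
  have hint : IntegrableOn (fun x : ℝ =>
      ((gaussianPDFReal 0 ((σ : ℝ) ^ 2).toNNReal x).toNNReal : ℝ) • |x| ^ (2 * t))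
      {x : ℝ | a < |x|} := by
    apply Integrable.mono' (hg_int.restrict (s := {x : ℝ | a < |x|}))
      hmeas.aestronglyMeasurable.restrict
    filter_upwards [ae_restrict_mem hS] with x hx
    rw [Real.norm_eq_abs, abs_of_nonneg (by positivity)]
    exact hpt x hx
  calc ∫ x in {x : ℝ | a < |x|},
        ((gaussianPDFReal 0 ((σ : ℝ) ^ 2).toNNReal x).toNNReal : ℝ) • |x| ^ (2 * t)
      ≤ ∫ x in {x : ℝ | a < |x|}, g x :=
        setIntegral_mono_on hint (hg_int.restrict) hS hpt
    _ ≤ ∫ x, g x := setIntegral_le_integral hg_int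
        (Filter.Eventually.of_forall fun x => by positivity)
    _ = K * (c * ∫ x, Real.exp (-(1 / (8 * σ ^ 2)) * x ^ 2)) := by
        rw [hg_def]
        rw [integral_const_mul, integral_const_mul]
    _ = K * (c * Real.sqrt (Real.pi / (1 / (8 * σ ^ 2)))) := by
        rw [integral_gaussian]
    _ = 2 * (4 * t) ^ t * σ ^ (2 * t) * Real.exp (-a ^ 2 / (8 * σ ^ 2)) := by
        have h8 : Real.pi / (1 / (8 * σ ^ 2)) = 4 * (2 * Real.pi * σ ^ 2) := by
          field_simp; ring
        rw [h8, Real.sqrt_mul (by norm_num : (0:ℝ) ≤ 4),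
          show Real.sqrt 4 = 2 by rw [show (4:ℝ) = 2 ^ 2 by norm_num, Real.sqrt_sq (by norm_num)]]
        have hsq : Real.sqrt (2 * Real.pi * σ ^ 2) ≠ 0 := by
          have : 0 < Real.sqrt (2 * Real.pi * σ ^ 2) := Real.sqrt_pos.mpr (by positivity)
          exact this.ne'
        rw [hc_def, hK_def]
        field_simp

theorem sum_truncated_moment_bound (t : ℝ) (ht : 1 ≤ t) :
    ∃ C > 0, ∀ (ι : Type) [Fintype ι] (σ : ι → ℝ) (lam ν : ℝ) (s : ℕ),
      1 ≤ s → 0 < lam → 0 < ν → (∀ j, 0 < σ j) → (∀ j, σ j ≤ lam) →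
      (∑ j, σ j ^ t * Real.exp (-lam ^ 2 / σ j ^ 2)) ≤ (s : ℝ) * ν ^ t →
      ∀ τ ρ : ℝ, τ = (4 * t) ^ t * lam ^ t + ν ^ t / (s : ℝ) → ρ = (s : ℝ) * τ →
      (∑ j, ∫ x in {x : ℝ | τ < |x| ^ t}, |x| ^ (2 * t)
          ∂(gaussianReal 0 ((σ j) ^ 2).toNNReal))
        ≤ C * ρ ^ 2 := by
  have ht0 : 0 < t := lt_of_lt_of_le one_pos ht
  refine ⟨2, two_pos, ?_⟩
  intro ι _ σ lam ν s hs hlam hν hσ hσlam hsum τ ρ hτ hρ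
  have hs0 : (0:ℝ) < (s : ℝ) := by exact_mod_cast hs
  have hτpos : 0 < τ := by
    rw [hτ]; positivity
  set a : ℝ := τ ^ (1 / t) with ha_def
  have ha : 0 < a := Real.rpow_pos_of_pos hτpos _
  have hat : a ^ t = τ := by
    rw [ha_def, one_div, Real.rpow_inv_rpow hτpos.le ht0.ne']
  -- the set rewrite
  have hset : {x : ℝ | τ < |x| ^ t} = {x : ℝ | a < |x|} := by
    ext x
    simp only [Set.mem_setOf_eq]
    rw [← hat, Real.rpow_lt_rpow_iff ha.le (abs_nonneg x) ht0]
  -- a is large: 4 t lam ≤ a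
  have ha_large : 4 * t * lam ≤ a := by
    have h1 : (4 * t * lam) ^ t ≤ a ^ t := by
      rw [hat, hτ, Real.mul_rpow (by positivity) hlam.le]
      have : 0 < ν ^ t / (s:ℝ) := by positivity
      linarith
    exact (Real.rpow_le_rpow_iff (by positivity) ha.le ht0).mp h1
  -- per-term bound
  have hterm : ∀ j, (∫ x in {x : ℝ | τ < |x| ^ t}, |x| ^ (2 * t)
      ∂(gaussianReal 0 ((σ j) ^ 2).toNNReal))
      ≤ 2 * τ * (σ j ^ t * Real.exp (-lam ^ 2 / σ j ^ 2)) := by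
    intro j
    rw [hset]
    refine (gauss_tail_bound t (σ j) a ht (hσ j) ha).trans ?_
    have hσj := hσ j
    have hσ2t : σ j ^ (2 * t) = σ j ^ t * σ j ^ t := by
      rw [two_mul, Real.rpow_add (hσ j)]
    have hexp : Real.exp (-a ^ 2 / (8 * σ j ^ 2)) ≤ Real.exp (-lam ^ 2 / σ j ^ 2) := by
      apply Real.exp_le_exp.mpr
      rw [div_le_div_iff₀ (by positivity) (by positivity)]
      have h4 : 4 * lam ≤ a := by nlinarith [ha_large, hlam.le, ht]
      have ha2 : 8 * lam ^ 2 ≤ a ^ 2 := by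
        nlinarith [mul_le_mul_of_nonneg_right h4 hlam.le, sq_nonneg (a - 4 * lam)]
      nlinarith [sq_nonneg (σ j), hσ j]
    have hpow : σ j ^ t ≤ lam ^ t := Real.rpow_le_rpow (hσ j).le (hσlam j) ht0.le
    have hCτ : (4 * t) ^ t * lam ^ t ≤ τ := by
      rw [hτ]
      have : 0 < ν ^ t / (s:ℝ) := by positivity
      linarith
    calc 2 * (4 * t) ^ t * σ j ^ (2 * t) * Real.exp (-a ^ 2 / (8 * σ j ^ 2))
        = 2 * ((4 * t) ^ t * σ j ^ t) * (σ j ^ t * Real.exp (-a ^ 2 / (8 * σ j ^ 2))) := by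
          rw [hσ2t]; ring
      _ ≤ 2 * ((4 * t) ^ t * lam ^ t) * (σ j ^ t * Real.exp (-lam ^ 2 / σ j ^ 2)) := by
          apply mul_le_mul
          · have h4t : (0:ℝ) ≤ (4 * t) ^ t := by positivity
            nlinarith
          · apply mul_le_mul_of_nonneg_left hexp (by positivity)
          · positivity
          · positivity
      _ ≤ 2 * τ * (σ j ^ t * Real.exp (-lam ^ 2 / σ j ^ 2)) := by
          apply mul_le_mul_of_nonneg_right _ (by positivity)
          nlinarith
  calc (∑ j, ∫ x in {x : ℝ | τ < |x| ^ t}, |x| ^ (2 * t)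
        ∂(gaussianReal 0 ((σ j) ^ 2).toNNReal))
      ≤ ∑ j, 2 * τ * (σ j ^ t * Real.exp (-lam ^ 2 / σ j ^ 2)) :=
        Finset.sum_le_sum fun j _ => hterm j
    _ = 2 * τ * ∑ j, σ j ^ t * Real.exp (-lam ^ 2 / σ j ^ 2) := by
        rw [Finset.mul_sum]
    _ ≤ 2 * τ * ((s:ℝ) * ν ^ t) := by
        apply mul_le_mul_of_nonneg_left hsum (by positivity)
    _ ≤ 2 * ρ ^ 2 := by
        have hντ : ν ^ t ≤ (s:ℝ) * τ := by
          have : ν ^ t / (s:ℝ) ≤ τ := by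
            rw [hτ]
            have : (0:ℝ) ≤ (4 * t) ^ t * lam ^ t := by positivity
            linarith
          calc ν ^ t = ν ^ t / (s:ℝ) * (s:ℝ) := by field_simp
            _ ≤ τ * (s:ℝ) := mul_le_mul_of_nonneg_right this hs0.le
            _ = (s:ℝ) * τ := mul_comm _ _
        rw [hρ]
        calc 2 * τ * ((s:ℝ) * ν ^ t) = (2 * τ * (s:ℝ)) * ν ^ t := by ring
          _ ≤ (2 * τ * (s:ℝ)) * ((s:ℝ) * τ) :=
              mul_le_mul_of_nonneg_left hντ (by positivity)
          _ = 2 * ((s:ℝ) * τ) ^ 2 := by ring
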